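/- For f : X → GL_n(ℂ) smooth, setting {f} := trace((f^{-1} df)^{∧3}), one has 3·d(f|g) = {f} + {g} - {fg}, and {f^{-1}} = -{f}. -/

import Mathlib

attribute [local instance] Matrix.normedAddCommGroup Matrix.normedSpace
set_option maxHeartbeats 1000000

/-- For maps `f, g : X → GL_n(ℂ)`, the scalar 2-form `(f|g) = trace(f⁻¹ df ∧ dg g⁻¹)`,
evaluated at a point `x` on a pair of tangent vectors `(v, w)`. -/
noncomputable def pairForm {E : Type*} [NormedAddCommGroup E] [NormedSpace ℂ E] {n : ℕ}
    (f g : E → Matrix (Fin n) (Fin n) ℂ) (x v w : E) : ℂ :=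
  ((f x)⁻¹ * fderiv ℂ f x v * fderiv ℂ g x w * (g x)⁻¹).trace
    - ((f x)⁻¹ * fderiv ℂ f x w * fderiv ℂ g x v * (g x)⁻¹).trace

/-- The exterior derivative of the 2-form `(f|g)`, evaluated at `x` on `(u, v, w)`
(for constant vector fields on the vector space `E`). -/
noncomputable def dPairForm {E : Type*} [NormedAddCommGroup E] [NormedSpace ℂ E] {n : ℕ}
    (f g : E → Matrix (Fin n) (Fin n) ℂ) (x u v w : E) : ℂ :=
  fderiv ℂ (fun y => pairForm f g y v w) x u
    - fderiv ℂ (fun y => pairForm f g y u w) x v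
    + fderiv ℂ (fun y => pairForm f g y u v) x w

/-- The 3-form `{f} = trace((f⁻¹ df)^∧3)`, evaluated at `x` on `(u, v, w)`. -/
noncomputable def threeForm {E : Type*} [NormedAddCommGroup E] [NormedSpace ℂ E] {n : ℕ}
    (f : E → Matrix (Fin n) (Fin n) ℂ) (x u v w : E) : ℂ :=
  ∑ σ : Equiv.Perm (Fin 3),
    ((Equiv.Perm.sign σ : ℤ) : ℂ) *
      ((f x)⁻¹ * fderiv ℂ f x (![u, v, w] (σ 0)) *
        ((f x)⁻¹ * fderiv ℂ f x (![u, v, w] (σ 1))) *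
        ((f x)⁻¹ * fderiv ℂ f x (![u, v, w] (σ 2)))).trace

section AuxCalc
variable {E : Type*} [NormedAddCommGroup E] [NormedSpace ℂ E] {n : ℕ}
local notation "M" => Matrix (Fin n) (Fin n) ℂ

noncomputable def mulCLM (n : ℕ) :
    Matrix (Fin n) (Fin n) ℂ →L[ℂ] Matrix (Fin n) (Fin n) ℂ →L[ℂ] Matrix (Fin n) (Fin n) ℂ :=
  LinearMap.toContinuousLinearMap
  { toFun := fun a => LinearMap.toContinuousLinearMap (LinearMap.mul ℂ (Matrix (Fin n) (Fin n) ℂ) a)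
    map_add' := by intro a b; ext c; simp [add_mul]
    map_smul' := by intro r a; ext c; simp [smul_mul_assoc] }

@[simp] lemma mulCLM_apply (a b : M) : mulCLM n a b = a * b := rfl

lemma DifferentiableAt.mmul {f g : E → M} {x : E} (hf : DifferentiableAt ℂ f x)
    (hg : DifferentiableAt ℂ g x) : DifferentiableAt ℂ (fun y => f y * g y) x :=
  by have := ((mulCLM n).isBoundedBilinearMap.differentiableAt (f x, g x)).comp x (hf.prodMk hg); exact this

lemma fderiv_mmul {f g : E → M} {x : E} (hf : DifferentiableAt ℂ f x)
    (hg : DifferentiableAt ℂ g x) (u : E) :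
    fderiv ℂ (fun y => f y * g y) x u = fderiv ℂ f x u * g x + f x * fderiv ℂ g x u := by
  have h := (((mulCLM n).isBoundedBilinearMap.hasFDerivAt (f x, g x)).comp x
    (hf.hasFDerivAt.prodMk hg.hasFDerivAt))
  have h2 : fderiv ℂ (fun y => f y * g y) x =
      ((mulCLM n).isBoundedBilinearMap.deriv (f x, g x)).comp
        ((fderiv ℂ f x).prod (fderiv ℂ g x)) := h.fderiv
  rw [h2]
  exact add_comm _ _

noncomputable def traceCLM (n : ℕ) : Matrix (Fin n) (Fin n) ℂ →L[ℂ] ℂ :=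
  LinearMap.toContinuousLinearMap (Matrix.traceLinearMap (Fin n) ℂ ℂ)

lemma DifferentiableAt.mtrace {f : E → M} {x : E} (hf : DifferentiableAt ℂ f x) :
    DifferentiableAt ℂ (fun y => (f y).trace) x :=
  ((traceCLM n).differentiableAt (x := f x)).comp x hf

lemma fderiv_mtrace {f : E → M} {x : E} (hf : DifferentiableAt ℂ f x) (u : E) :
    fderiv ℂ (fun y => (f y).trace) x u = (fderiv ℂ f x u).trace := by
  have h := ((traceCLM n).hasFDerivAt (x := f x)).comp x hf.hasFDerivAt
  have h2 : fderiv ℂ (fun y => (f y).trace) x = (traceCLM n).comp (fderiv ℂ f x) := h.fderiv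
  rw [h2]; rfl

lemma contDiff_entry {f : E → M} (hf : ContDiff ℂ ⊤ f) (i j : Fin n) :
    ContDiff ℂ ⊤ (fun y => f y i j) :=
  contDiff_pi.mp (contDiff_pi.mp hf i) j

lemma contDiff_of_entries {f : E → M} (hf : ∀ i j, ContDiff ℂ ⊤ (fun y => f y i j)) :
    ContDiff ℂ ⊤ f := by
  apply contDiff_pi.mpr; intro i; exact contDiff_pi.mpr (hf i)

lemma contDiff_mdet {f : E → M} (hf : ContDiff ℂ ⊤ f) :
    ContDiff ℂ ⊤ (fun y => (f y).det) := by
  simp only [Matrix.det_apply]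
  apply ContDiff.sum; intro σ _
  simp only [Units.smul_def, zsmul_eq_mul]
  exact (contDiff_const).mul (contDiff_prod (fun i _ => contDiff_entry hf _ _))

lemma contDiff_madj {f : E → M} (hf : ContDiff ℂ ⊤ f) :
    ContDiff ℂ ⊤ (fun y => (f y).adjugate) := by
  apply contDiff_of_entries; intro i j
  simp only [Matrix.adjugate_apply]
  apply contDiff_mdet
  apply contDiff_of_entries; intro a b
  by_cases hab : a = j
  · simp only [Matrix.updateRow_apply, hab, if_pos rfl]
    exact contDiff_const
  · simp [Matrix.updateRow_apply, hab]; exact contDiff_entry hf _ _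

lemma contDiff_minv {f : E → M} (hf : ContDiff ℂ ⊤ f) (hu : ∀ y, IsUnit (f y)) :
    ContDiff ℂ ⊤ (fun y => (f y)⁻¹) := by
  have he : (fun y => (f y)⁻¹) = fun y => ((f y).det)⁻¹ • (f y).adjugate := by
    funext y; rw [Matrix.inv_def, Ring.inverse_eq_inv']
  rw [he]
  exact (((contDiff_mdet hf)).inv
    (fun y => ((Matrix.isUnit_iff_isUnit_det _).mp (hu y)).ne_zero)).smul (contDiff_madj hf)

lemma contDiff_fderiv_app {f : E → M} (hf : ContDiff ℂ ⊤ f) (v : E) :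
    ContDiff ℂ ⊤ (fun y => fderiv ℂ f y v) :=
  (hf.fderiv_right le_top).clm_apply contDiff_const

lemma fderiv_fderiv_symm {f : E → M} (hf : ContDiff ℂ ⊤ f) (x u v : E) :
    fderiv ℂ (fun y => fderiv ℂ f y v) x u = fderiv ℂ (fun y => fderiv ℂ f y u) x v := by
  have hd : DifferentiableAt ℂ (fderiv ℂ f) x :=
    ((hf.fderiv_right (m := ⊤) le_top).differentiable (by simp)) x
  have e1 : fderiv ℂ (fun y => fderiv ℂ f y v) x u = fderiv ℂ (fderiv ℂ f) x u v := by
    erw [fderiv_clm_apply hd (differentiableAt_const v)]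
    rw [fderiv_const_apply]
    have : ∀ (A : E →L[ℂ] M) (B : M), (A ∘L (0 : E →L[ℂ] E)) u + B = B := fun A B => by simp
    exact this _ _
  have e2 : fderiv ℂ (fun y => fderiv ℂ f y u) x v = fderiv ℂ (fderiv ℂ f) x v u := by
    erw [fderiv_clm_apply hd (differentiableAt_const u)]
    rw [fderiv_const_apply]
    have : ∀ (A : E →L[ℂ] M) (B : M), (A ∘L (0 : E →L[ℂ] E)) v + B = B := fun A B => by simp
    exact this _ _
  rw [e1, e2]
  exact (((hf.contDiffAt (x := x)).isSymmSndFDerivAt (by exact_mod_cast le_top)) u v : _)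

lemma fderiv_minv {f : E → M} (hf : ContDiff ℂ ⊤ f) (hu : ∀ y, IsUnit (f y)) (x u : E) :
    fderiv ℂ (fun y => (f y)⁻¹) x u = -((f x)⁻¹ * fderiv ℂ f x u * (f x)⁻¹) := by
  have hdet : ∀ y, IsUnit (f y).det := fun y => (Matrix.isUnit_iff_isUnit_det _).mp (hu y)
  have dInv : DifferentiableAt ℂ (fun y => (f y)⁻¹) x :=
    ((contDiff_minv hf hu).differentiable (by simp)) x
  have dF : DifferentiableAt ℂ f x := (hf.differentiable (by simp)) x
  have h1 : (fun y => (f y)⁻¹ * f y) = (fun _ => (1 : M)) :=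
    funext fun y => Matrix.nonsing_inv_mul _ (hdet y)
  have e : fderiv ℂ (fun y => (f y)⁻¹) x u * f x + (f x)⁻¹ * fderiv ℂ f x u = 0 := by
    rw [← fderiv_mmul dInv dF u, h1]
    simp
  have e2 : fderiv ℂ (fun y => (f y)⁻¹) x u * f x = -((f x)⁻¹ * fderiv ℂ f x u) :=
    eq_neg_of_add_eq_zero_left e
  have hfi : f x * (f x)⁻¹ = 1 := Matrix.mul_nonsing_inv _ (hdet x)
  calc fderiv ℂ (fun y => (f y)⁻¹) x u
      = fderiv ℂ (fun y => (f y)⁻¹) x u * (f x * (f x)⁻¹) := by rw [hfi, mul_one]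
    _ = fderiv ℂ (fun y => (f y)⁻¹) x u * f x * (f x)⁻¹ := by rw [mul_assoc]
    _ = -((f x)⁻¹ * fderiv ℂ f x u) * (f x)⁻¹ := by rw [e2]
    _ = -((f x)⁻¹ * fderiv ℂ f x u * (f x)⁻¹) := by rw [neg_mul]

lemma fderiv_quad {f g : E → M} (hf : ContDiff ℂ ⊤ f) (hg : ContDiff ℂ ⊤ g)
    (hfu : ∀ y, IsUnit (f y)) (hgu : ∀ y, IsUnit (g y)) (x a b c : E) :
    fderiv ℂ (fun y => ((f y)⁻¹ * fderiv ℂ f y a * fderiv ℂ g y b * (g y)⁻¹).trace) x c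
      = (-((f x)⁻¹ * fderiv ℂ f x c * (f x)⁻¹) * fderiv ℂ f x a * fderiv ℂ g x b * (g x)⁻¹).trace
        + ((f x)⁻¹ * fderiv ℂ (fun y => fderiv ℂ f y a) x c * fderiv ℂ g x b * (g x)⁻¹).trace
        + ((f x)⁻¹ * fderiv ℂ f x a * fderiv ℂ (fun y => fderiv ℂ g y b) x c * (g x)⁻¹).trace
        + ((f x)⁻¹ * fderiv ℂ f x a * fderiv ℂ g x b
            * -((g x)⁻¹ * fderiv ℂ g x c * (g x)⁻¹)).trace := by
  have d1 : DifferentiableAt ℂ (fun y => (f y)⁻¹) x :=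
    ((contDiff_minv hf hfu).differentiable (by simp)) x
  have d2 : DifferentiableAt ℂ (fun y => fderiv ℂ f y a) x :=
    ((contDiff_fderiv_app hf a).differentiable (by simp)) x
  have d3 : DifferentiableAt ℂ (fun y => fderiv ℂ g y b) x :=
    ((contDiff_fderiv_app hg b).differentiable (by simp)) x
  have d4 : DifferentiableAt ℂ (fun y => (g y)⁻¹) x :=
    ((contDiff_minv hg hgu).differentiable (by simp)) x
  have d12 := d1.mmul d2
  have d123 := d12.mmul d3
  have d1234 := d123.mmul d4
  rw [fderiv_mtrace d1234 c, fderiv_mmul d123 d4 c, fderiv_mmul d12 d3 c,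
    fderiv_mmul d1 d2 c, fderiv_minv hf hfu x c, fderiv_minv hg hgu x c]
  simp only [add_mul, Matrix.trace_add]

lemma fderiv_pair {f g : E → M} (hf : ContDiff ℂ ⊤ f) (hg : ContDiff ℂ ⊤ g)
    (hfu : ∀ y, IsUnit (f y)) (hgu : ∀ y, IsUnit (g y)) (x a b c : E) :
    fderiv ℂ (fun y => pairForm f g y a b) x c
      = ((-((f x)⁻¹ * fderiv ℂ f x c * (f x)⁻¹) * fderiv ℂ f x a * fderiv ℂ g x b * (g x)⁻¹).trace
        + ((f x)⁻¹ * fderiv ℂ (fun y => fderiv ℂ f y a) x c * fderiv ℂ g x b * (g x)⁻¹).trace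
        + ((f x)⁻¹ * fderiv ℂ f x a * fderiv ℂ (fun y => fderiv ℂ g y b) x c * (g x)⁻¹).trace
        + ((f x)⁻¹ * fderiv ℂ f x a * fderiv ℂ g x b
            * -((g x)⁻¹ * fderiv ℂ g x c * (g x)⁻¹)).trace)
      - ((-((f x)⁻¹ * fderiv ℂ f x c * (f x)⁻¹) * fderiv ℂ f x b * fderiv ℂ g x a * (g x)⁻¹).trace
        + ((f x)⁻¹ * fderiv ℂ (fun y => fderiv ℂ f y b) x c * fderiv ℂ g x a * (g x)⁻¹).trace
        + ((f x)⁻¹ * fderiv ℂ f x b * fderiv ℂ (fun y => fderiv ℂ g y a) x c * (g x)⁻¹).trace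
        + ((f x)⁻¹ * fderiv ℂ f x b * fderiv ℂ g x a
            * -((g x)⁻¹ * fderiv ℂ g x c * (g x)⁻¹)).trace) := by
  have dt : ∀ a b : E, DifferentiableAt ℂ
      (fun y => ((f y)⁻¹ * fderiv ℂ f y a * fderiv ℂ g y b * (g y)⁻¹).trace) x := by
    intro a b
    exact (((((contDiff_minv hf hfu).differentiable (by simp)) x).mmul
      (((contDiff_fderiv_app hf a).differentiable (by simp)) x)).mmul
      (((contDiff_fderiv_app hg b).differentiable (by simp)) x)).mmul
      (((contDiff_minv hg hgu).differentiable (by simp)) x) |>.mtrace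
  have hsplit : (fun y => pairForm f g y a b)
      = fun y => ((f y)⁻¹ * fderiv ℂ f y a * fderiv ℂ g y b * (g y)⁻¹).trace
          - ((f y)⁻¹ * fderiv ℂ f y b * fderiv ℂ g y a * (g y)⁻¹).trace := rfl
  rw [hsplit, fderiv_fun_sub (dt a b) (dt b a)]
  simp only [ContinuousLinearMap.coe_sub', Pi.sub_apply]
  rw [fderiv_quad hf hg hfu hgu x a b c, fderiv_quad hf hg hfu hgu x b a c]

lemma sum_perm3 (φ : Equiv.Perm (Fin 3) → ℂ) :
    ∑ σ : Equiv.Perm (Fin 3), φ σ =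
      φ 1 + φ (Equiv.swap 0 1) + φ (Equiv.swap 0 2) + φ (Equiv.swap 1 2)
        + φ (Equiv.swap 0 1 * Equiv.swap 1 2) + φ (Equiv.swap 1 2 * Equiv.swap 0 1) := by
  have h : (Finset.univ : Finset (Equiv.Perm (Fin 3))) =
      {1, Equiv.swap 0 1, Equiv.swap 0 2, Equiv.swap 1 2,
       Equiv.swap 0 1 * Equiv.swap 1 2, Equiv.swap 1 2 * Equiv.swap 0 1} := by decide
  rw [h, Finset.sum_insert (by decide), Finset.sum_insert (by decide),
    Finset.sum_insert (by decide), Finset.sum_insert (by decide),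
    Finset.sum_insert (by decide), Finset.sum_singleton]
  ring

lemma trace_sum_perm3 (B : Fin 3 → M) :
    (∑ σ : Equiv.Perm (Fin 3), ((Equiv.Perm.sign σ : ℤ) : ℂ) *
        (B (σ 0) * B (σ 1) * B (σ 2)).trace)
      = 3 * ((B 0 * B 1 * B 2).trace - (B 0 * B 2 * B 1).trace) := by
  rw [sum_perm3]
  have s1 : ((Equiv.Perm.sign (1 : Equiv.Perm (Fin 3)) : ℤ) : ℂ) = 1 := by norm_num
  have s2 : ((Equiv.Perm.sign (Equiv.swap (0:Fin 3) 1) : ℤ) : ℂ) = -1 := by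
    rw [Equiv.Perm.sign_swap (by decide)]; norm_num
  have s3 : ((Equiv.Perm.sign (Equiv.swap (0:Fin 3) 2) : ℤ) : ℂ) = -1 := by
    rw [Equiv.Perm.sign_swap (by decide)]; norm_num
  have s4 : ((Equiv.Perm.sign (Equiv.swap (1:Fin 3) 2) : ℤ) : ℂ) = -1 := by
    rw [Equiv.Perm.sign_swap (by decide)]; norm_num
  have s5 : ((Equiv.Perm.sign ((Equiv.swap 0 1 * Equiv.swap 1 2 : Equiv.Perm (Fin 3))) : ℤ) : ℂ) = 1 := by
    rw [map_mul, Equiv.Perm.sign_swap (by decide), Equiv.Perm.sign_swap (by decide)]; norm_num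
  have s6 : ((Equiv.Perm.sign ((Equiv.swap 1 2 * Equiv.swap 0 1 : Equiv.Perm (Fin 3))) : ℤ) : ℂ) = 1 := by
    rw [map_mul, Equiv.Perm.sign_swap (by decide), Equiv.Perm.sign_swap (by decide)]; norm_num
  rw [s1, s2, s3, s4, s5, s6]
  have a1 : (Equiv.swap (0:Fin 3) 1) 0 = 1 := by decide
  have a2 : (Equiv.swap (0:Fin 3) 1) 1 = 0 := by decide
  have a3 : (Equiv.swap (0:Fin 3) 1) 2 = 2 := by decide
  have b1 : (Equiv.swap (0:Fin 3) 2) 0 = 2 := by decide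
  have b2 : (Equiv.swap (0:Fin 3) 2) 1 = 1 := by decide
  have b3 : (Equiv.swap (0:Fin 3) 2) 2 = 0 := by decide
  have d1 : (Equiv.swap (1:Fin 3) 2) 0 = 0 := by decide
  have d2 : (Equiv.swap (1:Fin 3) 2) 1 = 2 := by decide
  have d3 : (Equiv.swap (1:Fin 3) 2) 2 = 1 := by decide
  have e1 : ((Equiv.swap 0 1 * Equiv.swap 1 2 : Equiv.Perm (Fin 3))) 0 = 1 := by decide
  have e2 : ((Equiv.swap 0 1 * Equiv.swap 1 2 : Equiv.Perm (Fin 3))) 1 = 2 := by decide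
  have e3 : ((Equiv.swap 0 1 * Equiv.swap 1 2 : Equiv.Perm (Fin 3))) 2 = 0 := by decide
  have f1 : ((Equiv.swap 1 2 * Equiv.swap 0 1 : Equiv.Perm (Fin 3))) 0 = 2 := by decide
  have f2 : ((Equiv.swap 1 2 * Equiv.swap 0 1 : Equiv.Perm (Fin 3))) 1 = 0 := by decide
  have f3 : ((Equiv.swap 1 2 * Equiv.swap 0 1 : Equiv.Perm (Fin 3))) 2 = 1 := by decide
  simp only [a1, a2, a3, b1, b2, b3, d1, d2, d3, e1, e2, e3, f1, f2, f3, Equiv.Perm.one_apply]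
  have c1 : (B 1 * B 2 * B 0).trace = (B 0 * B 1 * B 2).trace :=
    Matrix.trace_mul_cycle (B 1) (B 2) (B 0)
  have c2 : (B 2 * B 0 * B 1).trace = (B 0 * B 1 * B 2).trace :=
    (Matrix.trace_mul_cycle (B 0) (B 1) (B 2)).symm
  have c3 : (B 1 * B 0 * B 2).trace = (B 0 * B 2 * B 1).trace :=
    (Matrix.trace_mul_cycle (B 0) (B 2) (B 1)).symm
  have c4 : (B 2 * B 1 * B 0).trace = (B 0 * B 2 * B 1).trace :=
    Matrix.trace_mul_cycle (B 2) (B 1) (B 0)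
  rw [c1, c2, c3, c4]; ring


lemma threeForm_eq (f : E → M) (x u v w : E) :
    threeForm f x u v w =
      3 * (((f x)⁻¹ * fderiv ℂ f x u * ((f x)⁻¹ * fderiv ℂ f x v)
              * ((f x)⁻¹ * fderiv ℂ f x w)).trace
          - ((f x)⁻¹ * fderiv ℂ f x u * ((f x)⁻¹ * fderiv ℂ f x w)
              * ((f x)⁻¹ * fderiv ℂ f x v)).trace) := by
  have h := trace_sum_perm3 (fun i => (f x)⁻¹ * fderiv ℂ f x (![u, v, w] i))
  simpa only [threeForm, Matrix.cons_val_zero, Matrix.cons_val_one, Matrix.head_cons,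
    Matrix.cons_val_two, Matrix.tail_cons] using h

lemma part2 {f : E → M} (hf : ContDiff ℂ ⊤ f) (hfu : ∀ y, IsUnit (f y)) (x u v w : E) :
    threeForm (fun y => (f y)⁻¹) x u v w = - threeForm f x u v w := by
  have hdet : ∀ y, IsUnit (f y).det := fun y => (Matrix.isUnit_iff_isUnit_det _).mp (hfu y)
  rw [threeForm_eq (fun y => (f y)⁻¹) x u v w, threeForm_eq f x u v w]
  rw [Matrix.nonsing_inv_nonsing_inv _ (hdet x), fderiv_minv hf hfu x u,
    fderiv_minv hf hfu x v, fderiv_minv hf hfu x w]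
  have hc : ∀ A : M, f x * ((f x)⁻¹ * A) = A := fun A => by
    rw [← mul_assoc, Matrix.mul_nonsing_inv _ (hdet x), one_mul]
  simp only [mul_neg, neg_mul, neg_neg, Matrix.trace_neg, mul_assoc, hc]
  have rot : ∀ A B C : M,
      (A * ((f x)⁻¹ * (B * ((f x)⁻¹ * (C * (f x)⁻¹))))).trace
        = ((f x)⁻¹ * (A * ((f x)⁻¹ * (B * ((f x)⁻¹ * C))))).trace := by
    intro A B C
    have h := Matrix.trace_mul_comm (A * ((f x)⁻¹ * (B * ((f x)⁻¹ * C)))) ((f x)⁻¹)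
    simp only [mul_assoc] at h
    exact h
  rw [rot (fderiv ℂ f x u) (fderiv ℂ f x v) (fderiv ℂ f x w),
    rot (fderiv ℂ f x u) (fderiv ℂ f x w) (fderiv ℂ f x v)]
  ring

lemma core (p q f0 g0 fu fv fw gu gv gw hvu hwu hwv kvu kwu kwv : M)
    (hp : p * f0 = 1) (hp' : f0 * p = 1) (hq : q * g0 = 1) (hq' : g0 * q = 1) :
    3 * ((((-(p * fu * p) * fv * gw * q).trace + (p * hvu * gw * q).trace
            + (p * fv * kwu * q).trace + (p * fv * gw * -(q * gu * q)).trace)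
          - ((-(p * fu * p) * fw * gv * q).trace + (p * hwu * gv * q).trace
            + (p * fw * kvu * q).trace + (p * fw * gv * -(q * gu * q)).trace))
        - (((-(p * fv * p) * fu * gw * q).trace + (p * hvu * gw * q).trace
            + (p * fu * kwv * q).trace + (p * fu * gw * -(q * gv * q)).trace)
          - ((-(p * fv * p) * fw * gu * q).trace + (p * hwv * gu * q).trace
            + (p * fw * kvu * q).trace + (p * fw * gu * -(q * gv * q)).trace))
        + (((-(p * fw * p) * fu * gv * q).trace + (p * hwu * gv * q).trace
            + (p * fu * kwv * q).trace + (p * fu * gv * -(q * gw * q)).trace)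
          - ((-(p * fw * p) * fv * gu * q).trace + (p * hwv * gu * q).trace
            + (p * fv * kwu * q).trace + (p * fv * gu * -(q * gw * q)).trace)))
      = (3 * ((p * fu * (p * fv) * (p * fw)).trace - (p * fu * (p * fw) * (p * fv)).trace)
        + 3 * ((q * gu * (q * gv) * (q * gw)).trace - (q * gu * (q * gw) * (q * gv)).trace))
        - 3 * ((q * p * (fu * g0 + f0 * gu) * (q * p * (fv * g0 + f0 * gv))
                  * (q * p * (fw * g0 + f0 * gw))).trace
              - (q * p * (fu * g0 + f0 * gu) * (q * p * (fw * g0 + f0 * gw))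
                  * (q * p * (fv * g0 + f0 * gv))).trace) := by
  have c1 : ∀ X : M, p * (f0 * X) = X := fun X => by rw [← mul_assoc, hp, one_mul]
  have c2 : ∀ X : M, f0 * (p * X) = X := fun X => by rw [← mul_assoc, hp', one_mul]
  have c3 : ∀ X : M, q * (g0 * X) = X := fun X => by rw [← mul_assoc, hq, one_mul]
  have c4 : ∀ X : M, g0 * (q * X) = X := fun X => by rw [← mul_assoc, hq', one_mul]
  have key : ∀ A B : M, q * p * (A * g0 + f0 * B) = q * ((p * A + B * q) * g0) := by
    intro A B
    simp only [mul_add, add_mul, mul_assoc, c1, c2, hq, mul_one]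
  have tfg : ∀ A B C : M, (q * (A * g0) * (q * (B * g0)) * (q * (C * g0))).trace
      = (A * (B * C)).trace := by
    intro A B C
    rw [Matrix.trace_mul_comm]
    simp only [mul_assoc, c4]
    rw [Matrix.trace_mul_comm]
    simp only [mul_assoc, hq', mul_one]
    rw [Matrix.trace_mul_comm]
    simp only [mul_assoc]
  rw [key, key, key, tfg, tfg]
  simp only [mul_add, add_mul, neg_mul, mul_neg, Matrix.trace_neg, Matrix.trace_add, mul_assoc]
  have r0 := Matrix.trace_mul_comm (gu*q) (p*(fv*(p*fw)))
  have r1 := Matrix.trace_mul_comm (p*(fu*(gv*q))) (p*fw)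
  have r2 := Matrix.trace_mul_comm (gu*(q*(gv*q))) (p*fw)
  have r3 := Matrix.trace_mul_comm (gu*q) (p*(fv*(gw*q)))
  have r4 := Matrix.trace_mul_comm (gu*(q*(gv*(q*gw)))) (q)
  have r5 := Matrix.trace_mul_comm (gu*q) (p*(fw*(p*fv)))
  have r6 := Matrix.trace_mul_comm (p*(fu*(gw*q))) (p*fv)
  have r7 := Matrix.trace_mul_comm (gu*(q*(gw*q))) (p*fv)
  have r8 := Matrix.trace_mul_comm (gu*q) (p*(fw*(gv*q)))
  have r9 := Matrix.trace_mul_comm (gu*(q*(gw*(q*gv)))) (q)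
  simp only [mul_assoc] at r0 r1 r2 r3 r4 r5 r6 r7 r8 r9
  rw [r0, r1, r2, r3, r4, r5, r6, r7, r8, r9]
  ring


lemma part1 {f g : E → M} (hf : ContDiff ℂ ⊤ f) (hg : ContDiff ℂ ⊤ g)
    (hfu : ∀ y, IsUnit (f y)) (hgu : ∀ y, IsUnit (g y)) (x u v w : E) :
    3 * dPairForm f g x u v w
      = threeForm f x u v w + threeForm g x u v w
          - threeForm (fun y => f y * g y) x u v w := by
  have hdf : ∀ y, IsUnit (f y).det := fun y => (Matrix.isUnit_iff_isUnit_det _).mp (hfu y)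
  have hdg : ∀ y, IsUnit (g y).det := fun y => (Matrix.isUnit_iff_isUnit_det _).mp (hgu y)
  have dfx : DifferentiableAt ℂ f x := (hf.differentiable (by simp)) x
  have dgx : DifferentiableAt ℂ g x := (hg.differentiable (by simp)) x
  unfold dPairForm
  rw [fderiv_pair hf hg hfu hgu x v w u, fderiv_pair hf hg hfu hgu x u w v,
    fderiv_pair hf hg hfu hgu x u v w,
    threeForm_eq f x u v w, threeForm_eq g x u v w,
    threeForm_eq (fun y => f y * g y) x u v w,
    Matrix.mul_inv_rev, fderiv_mmul dfx dgx u, fderiv_mmul dfx dgx v, fderiv_mmul dfx dgx w,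
    fderiv_fderiv_symm hf x v u, fderiv_fderiv_symm hf x w u, fderiv_fderiv_symm hf x w v,
    fderiv_fderiv_symm hg x v u, fderiv_fderiv_symm hg x w u, fderiv_fderiv_symm hg x w v]
  exact core ((f x)⁻¹) ((g x)⁻¹) (f x) (g x)
    (fderiv ℂ f x u) (fderiv ℂ f x v) (fderiv ℂ f x w)
    (fderiv ℂ g x u) (fderiv ℂ g x v) (fderiv ℂ g x w)
    (fderiv ℂ (fun y => fderiv ℂ f y v) x u) (fderiv ℂ (fun y => fderiv ℂ f y w) x u)
    (fderiv ℂ (fun y => fderiv ℂ f y w) x v)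
    (fderiv ℂ (fun y => fderiv ℂ g y v) x u) (fderiv ℂ (fun y => fderiv ℂ g y w) x u)
    (fderiv ℂ (fun y => fderiv ℂ g y w) x v)
    (Matrix.nonsing_inv_mul _ (hdf x)) (Matrix.mul_nonsing_inv _ (hdf x))
    (Matrix.nonsing_inv_mul _ (hdg x)) (Matrix.mul_nonsing_inv _ (hdg x))

end AuxCalc

/-- `3 d(f|g) = {f} + {g} - {fg}` and `{f⁻¹} = -{f}`. -/
theorem stmt_6 {E : Type*} [NormedAddCommGroup E] [NormedSpace ℂ E] {n : ℕ}
    (f g : E → Matrix (Fin n) (Fin n) ℂ)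
    (hf : ContDiff ℂ ⊤ f) (hg : ContDiff ℂ ⊤ g)
    (hfu : ∀ x, IsUnit (f x)) (hgu : ∀ x, IsUnit (g x)) :
    (∀ x u v w : E,
      3 * dPairForm f g x u v w
        = threeForm f x u v w + threeForm g x u v w
            - threeForm (fun y => f y * g y) x u v w) ∧
    (∀ x u v w : E,
      threeForm (fun y => (f y)⁻¹) x u v w = - threeForm f x u v w) := by
  constructor
  · intro x u v w
    exact part1 hf hg hfu hgu x u v w
  · intro x u v w
    exact part2 hf hfu x u v w
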